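/- If G is a d-regular simple graph on n vertices with n^(2/3) < d ≤ n^(3/4), then the second largest eigenvalue λ₂ of the adjacency matrix of G satisfies λ₂ ≥ n/(2d) - 1. -/

import Mathlib

open Matrix Finset


private lemma stmt1_den (n d : ℝ) (hq : 0 ≤ n - 2*d - 1) (hn2 : n < d^2)
    (hnpos : 0 < n) (hdpos : 0 < d) :
    0 < (3*d^2)^2 * (n^2 - n) + 2*(3*d^2)*(2*n) * (-(n*d)) + (2*n)^2 * (n^2*d - n*d^2) := by
  have h1 : 0 ≤ (n - 2*d - 1) * (9*n*d^4) := mul_nonneg hq (by positivity)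
  have h2 : 0 ≤ (n - 2*d - 1) * (4*n^3*d) := mul_nonneg hq (by positivity)
  have h3 : 0 ≤ (n - 2*d - 1) * (4*n^2*d^2) := mul_nonneg hq (by positivity)
  have h4 : 0 < (2*n*d^3) * (9*d^2 - 2*n) := mul_pos (by positivity) (by nlinarith)
  have h5 : 0 < 4*n^3*d := by positivity
  have h6 : 0 < 4*n^2*d^2 := by positivity
  nlinarith [h1, h2, h3, h4, h5, h6]

private lemma stmt1_main (n d T : ℝ) (hT : 0 ≤ T)
    (h1 : n^2 + 1 ≤ d^3) (h2 : d^4 ≤ n^3) (h3 : 2*d + 1 ≤ n) (h4 : 5 ≤ d) :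
    (n/(2*d) - 1) * ((3*d^2)^2*(n^2 - n) + 2*(3*d^2)*(2*n)*(-(n*d)) + (2*n)^2*(n^2*d - n*d^2))
      ≤ (3*d^2)^2*(-(n*d)) + 2*(3*d^2)*(2*n)*(n^2*d - n*d^2) + (2*n)^2*(n^2*T - n*d^3) := by
  have hd0 : (0:ℝ) < d := by linarith
  have hn0 : (0:ℝ) < n := by linarith
  have hg1 : 0 ≤ d^3 - n^2 - 1 := by linarith
  have hg2 : 0 ≤ n^3 - d^4 := by linarith
  have hg3 : 0 ≤ n - 2*d - 1 := by linarith
  have hg4 : 0 ≤ d - 5 := by linarith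
  have hτ : n/(2*d) - 1 = (n - 2*d)/(2*d) := by field_simp
  rw [hτ, div_mul_eq_mul_div, div_le_iff₀ (by positivity : (0:ℝ) < 2*d)]
  nlinarith [mul_nonneg hg4 (by positivity : (0:ℝ) ≤ n^2*d^2),
    mul_nonneg (mul_nonneg hg3 hg4) (by positivity : (0:ℝ) ≤ n*d^4),
    mul_nonneg hg2 (by positivity : (0:ℝ) ≤ n*d),
    mul_nonneg (mul_nonneg hg3 hg4) (by positivity : (0:ℝ) ≤ n^2*d^2),
    mul_nonneg hg1 (by positivity : (0:ℝ) ≤ n*d),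
    mul_nonneg hg3 (by positivity : (0:ℝ) ≤ n^3*d^2),
    mul_nonneg (mul_nonneg hg1 hg3) (by positivity : (0:ℝ) ≤ n*d^2),
    mul_nonneg hg3 (by positivity : (0:ℝ) ≤ n*d^3),
    mul_nonneg (mul_nonneg hg1 hg3) (by positivity : (0:ℝ) ≤ n*d),
    mul_nonneg hg4 (by positivity : (0:ℝ) ≤ n*d^2),
    mul_nonneg hg2 (by positivity : (0:ℝ) ≤ n*d^2),
    mul_nonneg hg3 (by positivity : (0:ℝ) ≤ n*d),
    mul_nonneg hg4 (by positivity : (0:ℝ) ≤ n^3*d^2),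
    mul_nonneg hg3 (by positivity : (0:ℝ) ≤ n^2*d^3),
    mul_nonneg hg3 (by positivity : (0:ℝ) ≤ n^2*d^4),
    mul_nonneg (mul_nonneg hg1 hg3) (by positivity : (0:ℝ) ≤ n^2*d),
    mul_nonneg hg4 (by positivity : (0:ℝ) ≤ n*d^3),
    mul_nonneg hT (by positivity : (0:ℝ) ≤ 8*n^4*d)]

private lemma stmt1_d5 {n d : ℕ} (h1 : n^2 < d^3) (h3 : 2*d+1 ≤ n) : 5 ≤ d := by
  have h : (2*d+1)^2 < d^3 := lt_of_le_of_lt (Nat.pow_le_pow_left h3 2) h1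
  by_contra hlt
  push_neg at hlt
  interval_cases d <;> omega

private lemma stmt1_dn2 {n d : ℕ} (h1 : n^2 < d^3) (h2 : d^4 ≤ n^3) (h3 : d < n) :
    d + 2 ≤ n := by
  by_contra h
  push_neg at h
  have hn : n = d + 1 := by omega
  subst hn
  have hd2 : d ≤ 2 := by
    by_contra hgt
    push_neg at hgt
    have e0 : 3 ≤ d := hgt
    have e1 : 3*d^3 ≤ d*d^3 := mul_le_mul_left e0 (d^3)
    have e2 : 3*d^2 ≤ d*d^2 := mul_le_mul_left e0 (d^2)
    have e3 : 3*d ≤ d*d := mul_le_mul_left e0 d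
    nlinarith [e1, e2, e3]
  interval_cases d <;> omega

private lemma stmt1_quad {n d : ℕ} (G : SimpleGraph (Fin n)) [DecidableRel G.Adj]
    (hreg : G.IsRegularOfDegree d) (y : Fin n → ℝ) :
    y ⬝ᵥ (G.adjMatrix ℝ *ᵥ y) ≤ (d:ℝ) * (y ⬝ᵥ y) := by
  have piece : ∀ (c : ℝ) (i : Fin n), ∑ j, (if G.Adj i j then c else 0) = (d:ℝ) * c := by
    intro c i
    rw [← Finset.sum_filter, ← SimpleGraph.neighborFinset_eq_filter, Finset.sum_const,
      SimpleGraph.card_neighborFinset_eq_degree, hreg i, nsmul_eq_mul]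
  have expand : y ⬝ᵥ (G.adjMatrix ℝ *ᵥ y)
      = ∑ i, ∑ j, (if G.Adj i j then y i * y j else 0) :=
    G.dotProduct_mulVec_adjMatrix _ _
  rw [expand]
  have step1 : ∑ i, ∑ j, (if G.Adj i j then y i * y j else 0)
      ≤ ∑ i, ∑ j, ((if G.Adj i j then y i^2/2 else 0) + (if G.Adj i j then y j^2/2 else 0)) := by
    refine Finset.sum_le_sum fun i _ => Finset.sum_le_sum fun j _ => ?_
    split_ifs with h
    · nlinarith [sq_nonneg (y i - y j)]
    · simp
  refine step1.trans (le_of_eq ?_)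
  have split : ∑ i, ∑ j, ((if G.Adj i j then y i^2/2 else 0) + (if G.Adj i j then y j^2/2 else 0))
      = (∑ i, ∑ j, (if G.Adj i j then y i^2/2 else 0))
        + ∑ i, ∑ j, (if G.Adj i j then y j^2/2 else 0) := by
    rw [← Finset.sum_add_distrib]
    exact Finset.sum_congr rfl fun i _ => Finset.sum_add_distrib
  rw [split]
  have c1 : ∑ i, ∑ j, (if G.Adj i j then y i^2/2 else 0) = ∑ i : Fin n, (d:ℝ) * (y i^2/2) :=
    Finset.sum_congr rfl fun i _ => piece _ i
  have c2 : ∑ i, ∑ j, (if G.Adj i j then y j^2/2 else 0) = ∑ j : Fin n, (d:ℝ) * (y j^2/2) := by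
    rw [Finset.sum_comm]
    refine Finset.sum_congr rfl fun j _ => ?_
    have : ∀ i : Fin n, (if G.Adj i j then y j^2/2 else 0) = (if G.Adj j i then y j^2/2 else 0) := by
      intro i
      by_cases h : G.Adj i j
      · rw [if_pos h, if_pos (G.adj_symm h)]
      · rw [if_neg h, if_neg fun h' => h (G.adj_symm h')]
    rw [Finset.sum_congr rfl fun i _ => this i, piece _ j]
  rw [c1, c2, ← Finset.sum_add_distrib]
  unfold dotProduct
  rw [Finset.mul_sum]
  refine Finset.sum_congr rfl fun i _ => ?_
  ring

private lemma stmt1_spec {n d : ℕ} (hn : 2 ≤ n) (G : SimpleGraph (Fin n)) [DecidableRel G.Adj]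
    (hreg : G.IsRegularOfDegree d) (hA : (G.adjMatrix ℝ).IsHermitian)
    (μ : Fin n → ℝ) (hμ : Antitone μ) (σ : Equiv.Perm (Fin n)) (hσ : μ = hA.eigenvalues ∘ σ)
    (τ : ℝ) (hτd : τ ≤ d)
    (x : Fin n → ℝ) (hx1 : (Function.const (Fin n) (1:ℝ)) ⬝ᵥ x = 0) (hx2 : 0 < x ⬝ᵥ x)
    (hx3 : τ * (x ⬝ᵥ x) ≤ x ⬝ᵥ (G.adjMatrix ℝ *ᵥ x)) :
    τ ≤ μ ⟨1, Nat.lt_of_lt_of_le Nat.one_lt_two hn⟩ := by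
  by_contra hcon
  push_neg at hcon
  set A := G.adjMatrix ℝ with hAdef
  set E := hA.eigenvalues with hE
  set U : Matrix (Fin n) (Fin n) ℝ := (hA.eigenvectorUnitary : Matrix (Fin n) (Fin n) ℝ) with hU
  have hU1 : star U * U = 1 := Unitary.coe_star_mul_self hA.eigenvectorUnitary
  have hU2 : U * star U = 1 := Unitary.coe_mul_star_self hA.eigenvectorUnitary
  have hspec : A = U * Matrix.diagonal E * star U := by
    have h := hA.spectral_theorem
    have h2 : (RCLike.ofReal ∘ E : Fin n → ℝ) = E := by
      funext i
      simp [RCLike.ofReal_real_eq_id]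
    rw [h2] at h
    exact h
  have hEd : ∀ i, E i ≤ (d:ℝ) := by
    intro i
    have hv := hA.mulVec_eigenvectorBasis i
    set v : Fin n → ℝ := ⇑(hA.eigenvectorBasis i) with hv_def
    have hvv : v ⬝ᵥ v = 1 := by
      have hnorm : ‖hA.eigenvectorBasis i‖ = 1 := hA.eigenvectorBasis.orthonormal.1 i
      rw [EuclideanSpace.norm_eq] at hnorm
      have hsum : ∑ j, ‖hA.eigenvectorBasis i j‖^2 = 1 := by
        have := Real.sqrt_eq_one.mp hnorm
        exact this
      calc v ⬝ᵥ v = ∑ j, ‖hA.eigenvectorBasis i j‖^2 := by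
            unfold dotProduct
            refine Finset.sum_congr rfl fun j _ => ?_
            rw [Real.norm_eq_abs, sq_abs, sq]
        _ = 1 := hsum
    have hray : v ⬝ᵥ (A *ᵥ v) = E i * (v ⬝ᵥ v) := by
      rw [hv, dotProduct_smul, smul_eq_mul]
    have hq := stmt1_quad G hreg v
    rw [hray, hvv] at hq
    simpa using hq
  set i0 : Fin n := σ ⟨0, by omega⟩ with hi0
  have hEle : ∀ j, j ≠ i0 → E j ≤ μ ⟨1, by omega⟩ := by
    intro j hj
    have h1 : E j = μ (σ.symm j) := by rw [hσ]; simp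
    have h2 : σ.symm j ≠ ⟨0, by omega⟩ := by
      intro h
      apply hj
      rw [← Equiv.apply_symm_apply σ j, h]
    have h3 : (⟨1, by omega⟩ : Fin n) ≤ σ.symm j := by
      rw [Fin.le_def]
      have hne : (σ.symm j).val ≠ 0 := fun h0 => h2 (Fin.ext h0)
      show 1 ≤ ((σ.symm j) : ℕ)
      omega
    rw [h1]
    exact hμ h3
  set one : Fin n → ℝ := Function.const (Fin n) (1:ℝ) with hone_def
  have hAone : A *ᵥ one = (d:ℝ) • one := by
    funext v
    rw [SimpleGraph.adjMatrix_mulVec_const_apply_of_regular hreg]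
    simp [hone_def]
  set b : Fin n → ℝ := star U *ᵥ one with hb_def
  set c : Fin n → ℝ := star U *ᵥ x with hc_def
  have hrecover : ∀ y : Fin n → ℝ, U *ᵥ (star U *ᵥ y) = y := by
    intro y
    rw [Matrix.mulVec_mulVec, hU2, Matrix.one_mulVec]
  have hstar : star U = Uᵀ := by
    ext i j
    simp [Matrix.star_apply]
  have hdotU : ∀ y z : Fin n → ℝ, y ⬝ᵥ (U *ᵥ z) = (star U *ᵥ y) ⬝ᵥ z := by
    intro y z
    rw [Matrix.dotProduct_mulVec, hstar, ← Matrix.mulVec_transpose]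
  have hDb : ∀ i, E i * b i = (d:ℝ) * b i := by
    intro i
    have step : star U *ᵥ (A *ᵥ one) = Matrix.diagonal E *ᵥ b := by
      rw [hspec, Matrix.mulVec_mulVec, ← Matrix.mul_assoc, ← Matrix.mul_assoc, hU1,
        Matrix.one_mul, ← Matrix.mulVec_mulVec]
    rw [hAone, Matrix.mulVec_smul] at step
    have := congrFun step i
    rw [Matrix.mulVec_diagonal] at this
    rw [Pi.smul_apply, smul_eq_mul] at this
    exact this.symm
  have hximg : A *ᵥ x = U *ᵥ (Matrix.diagonal E *ᵥ c) := by
    rw [hspec, ← Matrix.mulVec_mulVec, ← Matrix.mulVec_mulVec]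
  have hUc : x = U *ᵥ c := (hrecover x).symm
  have hxx : x ⬝ᵥ x = c ⬝ᵥ c := by
    conv_lhs => rw [hUc]
    rw [hdotU, Matrix.mulVec_mulVec, hU1, Matrix.one_mulVec]
  have hxAx : x ⬝ᵥ (A *ᵥ x) = ∑ i, E i * (c i)^2 := by
    rw [hximg, hdotU]
    unfold dotProduct
    refine Finset.sum_congr rfl fun i _ => ?_
    rw [Matrix.mulVec_diagonal]
    ring
  have h1x : (0:ℝ) = ∑ i, b i * c i := by
    rw [← hx1]
    conv_lhs => rw [hUc]
    rw [hdotU]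
    rfl
  have hbj : ∀ j, j ≠ i0 → b j = 0 := by
    intro j hj
    by_contra hbj0
    have hEj : E j = d := mul_right_cancel₀ hbj0 (hDb j)
    have h2 := hEle j hj
    rw [hEj] at h2
    linarith
  have hbi0 : b i0 ≠ 0 := by
    intro h0
    have hb_zero : b = 0 := by
      funext j
      by_cases hj : j = i0
      · rw [hj]; exact h0
      · exact hbj j hj
    have hone0 : one = 0 := by
      rw [← hrecover one, ← hb_def, hb_zero, Matrix.mulVec_zero]
    have := congrFun hone0 ⟨0, by omega⟩
    simp [hone_def] at this
  have hc0 : c i0 = 0 := by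
    have hsum : ∑ i, b i * c i = b i0 * c i0 := by
      refine Finset.sum_eq_single i0 (fun j _ hj => by rw [hbj j hj, zero_mul]) ?_
      intro h
      exact absurd (Finset.mem_univ i0) h
    have hzero : b i0 * c i0 = 0 := by rw [← hsum, ← h1x]
    rcases mul_eq_zero.mp hzero with h | h
    · exact absurd h hbi0
    · exact h
  have hbound : x ⬝ᵥ (A *ᵥ x) ≤ μ ⟨1, by omega⟩ * (x ⬝ᵥ x) := by
    rw [hxAx, hxx]
    have hcc : c ⬝ᵥ c = ∑ i, (c i)^2 := by
      unfold dotProduct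
      exact Finset.sum_congr rfl fun i _ => by ring
    rw [hcc, Finset.mul_sum]
    refine Finset.sum_le_sum fun i _ => ?_
    by_cases hi : i = i0
    · rw [hi, hc0]
      simp
    · exact mul_le_mul_of_nonneg_right (hEle i hi) (sq_nonneg _)
  have hlt : μ ⟨1, by omega⟩ * (x ⬝ᵥ x) < τ * (x ⬝ᵥ x) :=
    mul_lt_mul_of_pos_right hcon hx2
  exact lt_irrefl _ (lt_of_le_of_lt (hx3.trans hbound) hlt)

private lemma stmt1_witness {n d : ℕ} (hn : 2 ≤ n) (G : SimpleGraph (Fin n))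
    [DecidableRel G.Adj] (hreg : G.IsRegularOfDegree d)
    (hnat1 : n^2 < d^3) (hnat2 : d^4 ≤ n^3) :
    ∃ x : Fin n → ℝ, (Function.const (Fin n) (1:ℝ)) ⬝ᵥ x = 0 ∧ 0 < x ⬝ᵥ x ∧
      ((n:ℝ)/(2*(d:ℝ)) - 1) * (x ⬝ᵥ x) ≤ x ⬝ᵥ (G.adjMatrix ℝ *ᵥ x) := by
  set A := G.adjMatrix ℝ with hAdef
  set one : Fin n → ℝ := Function.const (Fin n) (1:ℝ) with hone_def
  set u : Fin n := ⟨0, by omega⟩ with hu_def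
  have hdpos : 0 < d := by
    rcases Nat.eq_zero_or_pos d with h | h
    · subst h; simp at hnat1
    · exact h
  have hdR : (0:ℝ) < d := by exact_mod_cast hdpos
  have hnR : (0:ℝ) < n := by positivity
  have hr1 : (n:ℝ)^2 < (d:ℝ)^3 := by exact_mod_cast hnat1
  have hr2 : (d:ℝ)^4 ≤ (n:ℝ)^3 := by exact_mod_cast hnat2
  rcases le_or_gt n (2*d) with hcase | hcase
  · -- n ≤ 2d : target is ≤ 0, use e_u - e_v for non-adjacent u v
    have hdlt : d < n := by
      have h := G.degree_lt_card_verts u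
      rwa [hreg u, Fintype.card_fin] at h
    have hdn2 : d + 2 ≤ n := stmt1_dn2 hnat1 hnat2 hdlt
    obtain ⟨v, hv⟩ : ∃ v : Fin n, v ∉ insert u (G.neighborFinset u) := by
      by_contra h
      push_neg at h
      have hsub : (Finset.univ : Finset (Fin n)) ⊆ insert u (G.neighborFinset u) :=
        fun w _ => h w
      have hcard := Finset.card_le_card hsub
      rw [Finset.card_univ, Fintype.card_fin] at hcard
      have hcard2 : (insert u (G.neighborFinset u)).card ≤ d + 1 := by
        refine (Finset.card_insert_le _ _).trans ?_
        rw [SimpleGraph.card_neighborFinset_eq_degree, hreg u]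
      omega
    have hvu : v ≠ u := fun h => hv (by rw [h]; exact Finset.mem_insert_self u _)
    have hadj : ¬ G.Adj u v :=
      fun h => hv (Finset.mem_insert_of_mem ((G.mem_neighborFinset u v).mpr h))
    have hadj' : ¬ G.Adj v u := fun h => hadj (G.adj_symm h)
    have h2 : (Pi.single u 1 - Pi.single v 1 : Fin n → ℝ) ⬝ᵥ (Pi.single u 1 - Pi.single v 1) = 2 := by
      rw [sub_dotProduct, dotProduct_sub, dotProduct_sub,
        single_dotProduct, single_dotProduct,
        single_dotProduct, single_dotProduct]
      rw [Pi.single_eq_same, Pi.single_eq_same,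
        Pi.single_eq_of_ne hvu, Pi.single_eq_of_ne (Ne.symm hvu)]
      norm_num
    refine ⟨Pi.single u 1 - Pi.single v 1, ?_, ?_, ?_⟩
    · rw [dotProduct_sub, dotProduct_single, dotProduct_single]
      simp [hone_def]
    · rw [h2]; norm_num
    · have hAx : (Pi.single u 1 - Pi.single v 1 : Fin n → ℝ) ⬝ᵥ
          (A *ᵥ (Pi.single u 1 - Pi.single v 1)) = 0 := by
        rw [Matrix.mulVec_sub, Matrix.mulVec_single, Matrix.mulVec_single]
        rw [sub_dotProduct, dotProduct_sub, dotProduct_sub,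
          single_dotProduct, single_dotProduct,
          single_dotProduct, single_dotProduct]
        simp only [hAdef, Pi.smul_apply, MulOpposite.op_one, one_smul, Matrix.col_apply,
          SimpleGraph.adjMatrix_apply]
        rw [if_neg (G.irrefl), if_neg (G.irrefl), if_neg hadj, if_neg hadj']
        ring
      rw [hAx, h2]
      have hτ : (n:ℝ)/(2*(d:ℝ)) - 1 ≤ 0 := by
        rw [sub_nonpos, div_le_one (by positivity)]
        exact_mod_cast hcase
      nlinarith
  · -- 2d < n : main construction
    have hd5 : 5 ≤ d := stmt1_d5 hnat1 (by omega)
    have hd5R : (5:ℝ) ≤ d := by exact_mod_cast hd5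
    have h2d1 : 2*(d:ℝ) + 1 ≤ n := by
      have h : (2*d + 1 : ℕ) ≤ n := by omega
      exact_mod_cast h
    have hnd2 : (n:ℝ) < (d:ℝ)^2 :=
      lt_of_pow_lt_pow_left₀ 2 (by positivity) (by nlinarith : (n:ℝ)^2 < ((d:ℝ)^2)^2)
    set e : Fin n → ℝ := Pi.single u 1 with he_def
    have hAone : A *ᵥ one = (d:ℝ) • one := by
      funext v
      rw [hAdef, SimpleGraph.adjMatrix_mulVec_const_apply_of_regular hreg]
      simp [hone_def]
    have honeone : one ⬝ᵥ one = (n:ℝ) := by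
      simp [dotProduct, hone_def]
    have heone : e ⬝ᵥ one = 1 := by
      rw [he_def, single_dotProduct]
      simp [hone_def]
    have honee : one ⬝ᵥ e = 1 := by
      rw [he_def, dotProduct_single]
      simp [hone_def]
    have hee : e ⬝ᵥ e = 1 := by
      rw [he_def, single_dotProduct, Pi.single_eq_same]
      norm_num
    have honemul : ∀ y : Fin n → ℝ, one ⬝ᵥ (A *ᵥ y) = (d:ℝ) * (one ⬝ᵥ y) := by
      intro y
      rw [Matrix.dotProduct_mulVec]
      have hrow : one ᵥ* A = (d:ℝ) • one := by
        funext v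
        rw [hAdef, SimpleGraph.adjMatrix_vecMul_apply]
        simp [hone_def, Finset.sum_const, SimpleGraph.card_neighborFinset_eq_degree, hreg v]
      rw [hrow, smul_dotProduct, smul_eq_mul]
    have hedot : ∀ y : Fin n → ℝ, e ⬝ᵥ y = y u := by
      intro y
      rw [he_def, single_dotProduct, one_mul]
    have he1 : e ⬝ᵥ (A *ᵥ e) = 0 := by
      rw [hedot, he_def, Matrix.mulVec_single]
      simp [hAdef]
    have he2 : e ⬝ᵥ (A *ᵥ (A *ᵥ e)) = (d:ℝ) := by
      rw [hedot, he_def, Matrix.mulVec_mulVec, Matrix.mulVec_single]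
      show (A*A) u u * 1 = (d:ℝ)
      rw [mul_one, hAdef, SimpleGraph.adjMatrix_mul_self_apply_self, hreg u]
    have hApos : ∀ i j, 0 ≤ A i j := by
      intro i j
      rw [hAdef, SimpleGraph.adjMatrix_apply]
      split_ifs <;> norm_num
    set T : ℝ := e ⬝ᵥ (A *ᵥ (A *ᵥ (A *ᵥ e))) with hT_def
    have hT0 : 0 ≤ T := by
      rw [hT_def, hedot, he_def, Matrix.mulVec_mulVec, Matrix.mulVec_mulVec,
        Matrix.mulVec_single]
      show 0 ≤ (A*A*A) u u * 1
      rw [mul_one]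
      rw [Matrix.mul_apply]
      refine Finset.sum_nonneg fun k _ => mul_nonneg ?_ (hApos _ _)
      rw [Matrix.mul_apply]
      exact Finset.sum_nonneg fun l _ => mul_nonneg (hApos _ _) (hApos _ _)
    have htr : ∀ a : Fin n → ℝ, a ᵥ* A = A *ᵥ a := by
      intro a
      rw [hAdef, ← Matrix.mulVec_transpose, SimpleGraph.transpose_adjMatrix]
    have hsym : ∀ a b : Fin n → ℝ, (A *ᵥ a) ⬝ᵥ b = a ⬝ᵥ (A *ᵥ b) := by
      intro a b
      rw [Matrix.dotProduct_mulVec, htr]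
    have ho1 : one ⬝ᵥ (A *ᵥ e) = (d:ℝ) := by rw [honemul, honee, mul_one]
    have ho2 : one ⬝ᵥ (A *ᵥ (A *ᵥ e)) = (d:ℝ)^2 := by rw [honemul, ho1]; ring
    have ho3 : one ⬝ᵥ (A *ᵥ (A *ᵥ (A *ᵥ e))) = (d:ℝ)^3 := by rw [honemul, ho2]; ring
    set w : Fin n → ℝ := (n:ℝ) • e - one with hw_def
    have hz1 : A *ᵥ w = (n:ℝ) • (A *ᵥ e) - (d:ℝ) • one := by
      rw [hw_def, Matrix.mulVec_sub, Matrix.mulVec_smul, hAone]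
    have hz2 : A *ᵥ (A *ᵥ w) = (n:ℝ) • (A *ᵥ (A *ᵥ e)) - ((d:ℝ)^2) • one := by
      rw [hz1, Matrix.mulVec_sub, Matrix.mulVec_smul, Matrix.mulVec_smul, hAone, smul_smul]
      norm_num [sq]
    have hz3 : A *ᵥ (A *ᵥ (A *ᵥ w)) = (n:ℝ) • (A *ᵥ (A *ᵥ (A *ᵥ e))) - ((d:ℝ)^3) • one := by
      rw [hz2, Matrix.mulVec_sub, Matrix.mulVec_smul, Matrix.mulVec_smul, hAone, smul_smul]
      norm_num
      ring_nf
    have hwdot : ∀ (y : Fin n → ℝ) (p q : ℝ), w ⬝ᵥ (p • y - q • one)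
        = (n:ℝ) * p * (e ⬝ᵥ y) - q * (n:ℝ) * (e ⬝ᵥ one) - p * (one ⬝ᵥ y)
          + q * (one ⬝ᵥ one) := by
      intro y p q
      rw [hw_def, sub_dotProduct, smul_dotProduct,
        dotProduct_sub, dotProduct_sub,
        dotProduct_smul, dotProduct_smul,
        dotProduct_smul, dotProduct_smul]
      simp only [smul_eq_mul]
      ring
    have s00 : w ⬝ᵥ w = (n:ℝ)^2 - n := by
      have h := hwdot e (n:ℝ) 1
      rw [one_smul, ← hw_def, hee, heone, honee, honeone] at h
      rw [h]; ring
    have s01 : w ⬝ᵥ (A *ᵥ w) = -((n:ℝ)*d) := by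
      have h := hwdot (A *ᵥ e) (n:ℝ) (d:ℝ)
      rw [← hz1, he1, heone, ho1, honeone] at h
      rw [h]; ring
    have s02 : w ⬝ᵥ (A *ᵥ (A *ᵥ w)) = (n:ℝ)^2*d - n*(d:ℝ)^2 := by
      have h := hwdot (A *ᵥ (A *ᵥ e)) (n:ℝ) ((d:ℝ)^2)
      rw [← hz2, he2, heone, ho2, honeone] at h
      rw [h]; ring
    have s03 : w ⬝ᵥ (A *ᵥ (A *ᵥ (A *ᵥ w))) = (n:ℝ)^2*T - n*(d:ℝ)^3 := by
      have h := hwdot (A *ᵥ (A *ᵥ (A *ᵥ e))) (n:ℝ) ((d:ℝ)^3)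
      rw [← hz3, ← hT_def, heone, ho3, honeone] at h
      rw [h]; ring
    have hzw : (A *ᵥ w) ⬝ᵥ w = w ⬝ᵥ (A *ᵥ w) := dotProduct_comm _ _
    have hzz : (A *ᵥ w) ⬝ᵥ (A *ᵥ w) = w ⬝ᵥ (A *ᵥ (A *ᵥ w)) := hsym w (A *ᵥ w)
    have hz12 : (A *ᵥ w) ⬝ᵥ (A *ᵥ (A *ᵥ w)) = w ⬝ᵥ (A *ᵥ (A *ᵥ (A *ᵥ w))) :=
      hsym w (A *ᵥ (A *ᵥ w))
    set x : Fin n → ℝ := (3*(d:ℝ)^2) • w + (2*(n:ℝ)) • (A *ᵥ w) with hx_def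
    have honew : one ⬝ᵥ w = 0 := by
      rw [hw_def, dotProduct_sub, dotProduct_smul, honee, honeone]
      simp
    have hxone : one ⬝ᵥ x = 0 := by
      rw [hx_def, dotProduct_add, dotProduct_smul, dotProduct_smul,
        honew, honemul, honew]
      simp
    have hden : x ⬝ᵥ x = (3*(d:ℝ)^2)^2*((n:ℝ)^2 - n)
        + 2*(3*(d:ℝ)^2)*(2*(n:ℝ))*(-((n:ℝ)*d)) + (2*(n:ℝ))^2*((n:ℝ)^2*d - n*(d:ℝ)^2) := by
      rw [hx_def]
      rw [add_dotProduct, smul_dotProduct, smul_dotProduct,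
        dotProduct_add, dotProduct_add,
        dotProduct_smul, dotProduct_smul,
        dotProduct_smul, dotProduct_smul]
      simp only [smul_eq_mul]
      rw [hzw, hzz, s00, s01, s02]
      ring
    have hnum : x ⬝ᵥ (A *ᵥ x) = (3*(d:ℝ)^2)^2*(-((n:ℝ)*d))
        + 2*(3*(d:ℝ)^2)*(2*(n:ℝ))*((n:ℝ)^2*d - n*(d:ℝ)^2)
        + (2*(n:ℝ))^2*((n:ℝ)^2*T - n*(d:ℝ)^3) := by
      rw [hx_def, Matrix.mulVec_add, Matrix.mulVec_smul, Matrix.mulVec_smul]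
      rw [add_dotProduct, smul_dotProduct, smul_dotProduct,
        dotProduct_add, dotProduct_add,
        dotProduct_smul, dotProduct_smul,
        dotProduct_smul, dotProduct_smul]
      simp only [smul_eq_mul]
      rw [hzz, hz12, s01, s02, s03]
      ring
    have hr1' : (n:ℝ)^2 + 1 ≤ (d:ℝ)^3 := by
      have h : (n^2 + 1 : ℕ) ≤ d^3 := hnat1
      exact_mod_cast h
    refine ⟨x, hxone, ?_, ?_⟩
    · rw [hden]
      exact stmt1_den (n:ℝ) (d:ℝ) (by linarith) hnd2 hnR hdR
    · rw [hden, hnum]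
      exact stmt1_main (n:ℝ) (d:ℝ) T hT0 hr1' hr2 h2d1 hd5R



/-- If `G` is a `d`-regular simple graph on `n ≥ 2` vertices with
`n^(2/3) < d ≤ n^(3/4)`, then the second largest eigenvalue `λ₂` of the adjacency
matrix of `G` satisfies `λ₂ ≥ n/(2d) - 1`. Here `μ` lists the eigenvalues of the
adjacency matrix in decreasing order, so `λ₂ = μ 1`. -/
theorem stmt_1 (n d : ℕ) (hn : 2 ≤ n)
    (G : SimpleGraph (Fin n)) [DecidableRel G.Adj]
    (hreg : G.IsRegularOfDegree d)
    (hA : (G.adjMatrix ℝ).IsHermitian)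
    (μ : Fin n → ℝ) (hμ : Antitone μ)
    (hperm : ∃ σ : Equiv.Perm (Fin n), μ = hA.eigenvalues ∘ σ)
    (hd1 : (n : ℝ) ^ ((2 : ℝ) / 3) < d) (hd2 : (d : ℝ) ≤ (n : ℝ) ^ ((3 : ℝ) / 4)) :
    μ ⟨1, by omega⟩ ≥ (n : ℝ) / (2 * d) - 1 := by
  obtain ⟨σ, hσ⟩ := hperm
  have hn0 : (0:ℝ) ≤ n := Nat.cast_nonneg n
  have hd0 : (0:ℝ) ≤ d := Nat.cast_nonneg d
  -- convert rpow hypotheses to polynomial inequalities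
  have key1 : ((n:ℝ) ^ ((2:ℝ)/3)) ^ (3:ℕ) = (n:ℝ) ^ (2:ℕ) := by
    rw [← Real.rpow_natCast ((n:ℝ) ^ ((2:ℝ)/3)) 3, ← Real.rpow_mul hn0,
      ← Real.rpow_natCast (n:ℝ) 2]
    norm_num
  have key2 : ((n:ℝ) ^ ((3:ℝ)/4)) ^ (4:ℕ) = (n:ℝ) ^ (3:ℕ) := by
    rw [← Real.rpow_natCast ((n:ℝ) ^ ((3:ℝ)/4)) 4, ← Real.rpow_mul hn0,
      ← Real.rpow_natCast (n:ℝ) 3]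
    norm_num
  have hr1 : (n:ℝ)^2 < (d:ℝ)^3 := by
    have h := pow_lt_pow_left₀ hd1 (Real.rpow_nonneg hn0 _) (by norm_num : (3:ℕ) ≠ 0)
    rwa [key1] at h
  have hr2 : (d:ℝ)^4 ≤ (n:ℝ)^3 := by
    have h := pow_le_pow_left₀ hd0 hd2 4
    rwa [key2] at h
  have hnat1 : n^2 < d^3 := by exact_mod_cast hr1
  have hnat2 : d^4 ≤ n^3 := by exact_mod_cast hr2
  have hdpos : 0 < d := by
    rcases Nat.eq_zero_or_pos d with h | h
    · subst h; simp at hnat1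
    · exact h
  have hdR : (0:ℝ) < d := by exact_mod_cast hdpos
  have hd1R : (1:ℝ) ≤ d := by exact_mod_cast hdpos
  have hd34 : (d:ℝ)^3 ≤ (d:ℝ)^4 := by nlinarith [pow_nonneg (by linarith : (0:ℝ) ≤ (d:ℝ)) 3]
  have hnd2 : (n:ℝ) < (d:ℝ)^2 :=
    lt_of_pow_lt_pow_left₀ 2 (by positivity) (by nlinarith : (n:ℝ)^2 < ((d:ℝ)^2)^2)
  have hτd : (n:ℝ)/(2*d) - 1 ≤ (d:ℝ) := by
    rw [sub_le_iff_le_add, div_le_iff₀ (by positivity : (0:ℝ) < 2*(d:ℝ))]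
    nlinarith
  obtain ⟨x, hx1, hx2, hx3⟩ := stmt1_witness hn G hreg hnat1 hnat2
  exact stmt1_spec hn G hreg hA μ hμ σ hσ ((n:ℝ)/(2*d) - 1) hτd x hx1 hx2 hx3
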